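/- Let m ≥ 1, let h ∈ 𝒮(ℝᵐ×ℝᵐ; ℂ) be a Schwartz function, and let g be a linear transformation of ℝᵐ such that g − 1 is invertible. Then lim_{ℏ → 0⁺} ℏ^{−m} ∫_{ℝᵐ} ĥ(v, ((g−1)v)/ℏ) dv = (2π)ᵐ · h(0,0) / |det(g − 1)|, where ĥ(x,y) = ∫_{ℝᵐ} h(x,ξ) e^{−i⟨y,ξ⟩} dξ is the Fourier transform of h in the second variable. -/

import Mathlib

open MeasureTheory RealInnerProductSpace Filter

/-- Fourier transform in the second variable:
`ĥ(x,y) = ∫ h(x,ξ) e^{−i⟨y,ξ⟩} dξ`. -/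
noncomputable def fhat {m : ℕ}
    (h : EuclideanSpace ℝ (Fin m) × EuclideanSpace ℝ (Fin m) → ℂ)
    (x y : EuclideanSpace ℝ (Fin m)) : ℂ :=
  ∫ ξ : EuclideanSpace ℝ (Fin m),
    h (x, ξ) * Complex.exp (-(Complex.I * ((⟪y, ξ⟫ : ℝ) : ℂ)))

section s8aux
open FourierTransform Real ContDiff

section aux
variable {G H : Type*} [NormedAddCommGroup G] [NormedSpace ℝ G]
  [NormedAddCommGroup H] [NormedSpace ℝ H]

lemma s8_iteratedFDeriv_comp_const_add {F : G → H} (hF : ContDiff ℝ ∞ F) (a : G) :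
    ∀ n : ℕ, iteratedFDeriv ℝ n (fun p => F (a + p)) =
      fun q => iteratedFDeriv ℝ n F (a + q) := by
  intro n
  induction n with
  | zero => funext q; ext v; simp
  | succ n IH =>
      funext q; ext v
      rw [iteratedFDeriv_succ_apply_left, iteratedFDeriv_succ_apply_left, IH]
      have hdiff : DifferentiableAt ℝ (iteratedFDeriv ℝ n F) (a + q) :=
        (hF.differentiable_iteratedFDeriv (by exact_mod_cast WithTop.coe_lt_top n)).differentiableAt
      have h1 : HasFDerivAt (fun q => iteratedFDeriv ℝ n F (a + q))
          (fderiv ℝ (iteratedFDeriv ℝ n F) (a + q)) q := by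
        exact (hdiff.hasFDerivAt.comp q ((hasFDerivAt_id q).const_add a)).congr_fderiv (by simp)
      rw [h1.fderiv]
end aux

section slice
variable {m : ℕ}
local notation "E" => EuclideanSpace ℝ (Fin m)

lemma s8_slice (h : SchwartzMap (EuclideanSpace ℝ (Fin m) × EuclideanSpace ℝ (Fin m)) ℂ)
    (x : E) (n : ℕ) (ξ : E) :
    ‖iteratedFDeriv ℝ n (fun ξ : E => h (x, ξ)) ξ‖ ≤ ‖iteratedFDeriv ℝ n ⇑h (x, ξ)‖ := by
  have hF : ContDiff ℝ ∞ (fun p : E × E => h (((x, 0) : E × E) + p)) :=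
    (h.smooth ⊤).comp (contDiff_const.add contDiff_id)
  have hco : (fun ξ : E => h (x, ξ)) =
      (fun p : E × E => h (((x, 0) : E × E) + p)) ∘ (ContinuousLinearMap.inr ℝ E E) := by
    funext ξ; simp [Prod.mk_add_mk]
  rw [hco, ContinuousLinearMap.iteratedFDeriv_comp_right _ hF _ (by exact_mod_cast le_top)]
  refine le_trans (ContinuousMultilinearMap.norm_compContinuousLinearMap_le _ _) ?_
  have h2 : iteratedFDeriv ℝ n (fun p : E × E => h (((x, 0) : E × E) + p))
      ((ContinuousLinearMap.inr ℝ E E) ξ) = iteratedFDeriv ℝ n ⇑h (x, ξ) := by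
    rw [s8_iteratedFDeriv_comp_const_add (h.smooth ⊤) ((x, 0) : E × E) n]
    norm_num [Prod.mk_add_mk]
  rw [h2]
  have hinr : ‖ContinuousLinearMap.inr ℝ E E‖ ≤ 1 := by
    refine ContinuousLinearMap.opNorm_le_bound _ zero_le_one (fun p => ?_)
    simp [Prod.norm_def]
  calc ‖iteratedFDeriv ℝ n ⇑h (x, ξ)‖ * ∏ _i : Fin n, ‖ContinuousLinearMap.inr ℝ E E‖
      ≤ ‖iteratedFDeriv ℝ n ⇑h (x, ξ)‖ * 1 := by
        exact mul_le_mul_of_nonneg_left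
          (Finset.prod_le_one (fun _ _ => norm_nonneg _) (fun _ _ => hinr)) (norm_nonneg _)
    _ = _ := mul_one _
end slice

section key
variable {m : ℕ}
local notation "Em" => EuclideanSpace ℝ (Fin m)
local notation "Pm" => EuclideanSpace ℝ (Fin m) × EuclideanSpace ℝ (Fin m)

lemma s8_decay (h : SchwartzMap (EuclideanSpace ℝ (Fin m) × EuclideanSpace ℝ (Fin m)) ℂ) :
    ∃ S : ℝ, 0 ≤ S ∧ ∀ n : ℕ, n ≤ m + 1 → ∀ p : Pm,
      (1 + ‖p.2‖) ^ (m + 1) * ‖iteratedFDeriv ℝ n ⇑h p‖ ≤ S := by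
  refine ⟨2 ^ (m + 1) * (Finset.Iic (m + 1, m + 1)).sup
    (schwartzSeminormFamily ℝ Pm ℂ) h,
    mul_nonneg (by positivity) (apply_nonneg _ _), ?_⟩
  intro n hn p
  refine le_trans ?_ (h.one_add_le_sup_seminorm_apply (m := (m + 1, m + 1)) le_rfl hn p)
  exact mul_le_mul_of_nonneg_right
    (pow_le_pow_left₀ (by positivity) (by linarith [norm_snd_le p]) _) (norm_nonneg _)

lemma s8_majorant_int : Integrable (fun ξ : Em => ((1 + ‖ξ‖) ^ (m + 1))⁻¹) := by
  have h0 : ((Module.finrank ℝ (EuclideanSpace ℝ (Fin m)) : ℝ)) < ((m + 1 : ℕ) : ℝ) := by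
    rw [finrank_euclideanSpace_fin]; exact_mod_cast Nat.lt_succ_self m
  refine (integrable_one_add_norm (E := EuclideanSpace ℝ (Fin m)) (μ := volume) h0).congr
    (Filter.Eventually.of_forall fun ξ => ?_)
  simp only []
  rw [show ((1 : ℝ) + ‖ξ‖) ^ (-((m + 1 : ℕ) : ℝ)) = (((1 : ℝ) + ‖ξ‖) ^ ((m + 1 : ℕ) : ℝ))⁻¹ from
    Real.rpow_neg (by positivity) _, Real.rpow_natCast]

lemma s8_slice_int (h : SchwartzMap (EuclideanSpace ℝ (Fin m) × EuclideanSpace ℝ (Fin m)) ℂ)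
    {S : ℝ} (hS : ∀ n : ℕ, n ≤ m + 1 → ∀ p : Pm,
      (1 + ‖p.2‖) ^ (m + 1) * ‖iteratedFDeriv ℝ n ⇑h p‖ ≤ S)
    (x : Em) {n : ℕ} (hn : n ≤ m + 1) :
    Integrable (fun ξ : Em => ‖iteratedFDeriv ℝ n (fun ξ : Em => h (x, ξ)) ξ‖) ∧
    ∫ ξ : Em, ‖iteratedFDeriv ℝ n (fun ξ : Em => h (x, ξ)) ξ‖ ≤
      S * ∫ ξ : Em, ((1 + ‖ξ‖) ^ (m + 1))⁻¹ := by
  have hb : ∀ ξ : Em, ‖iteratedFDeriv ℝ n (fun ξ : Em => h (x, ξ)) ξ‖ ≤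
      S * ((1 + ‖ξ‖) ^ (m + 1))⁻¹ := by
    intro ξ
    refine (s8_slice h x n ξ).trans ?_
    have h2 := hS n hn (x, ξ)
    rw [← div_eq_mul_inv, le_div_iff₀ (by positivity)]
    simpa [mul_comm] using h2
  have hcont : Continuous (fun ξ : Em => iteratedFDeriv ℝ n (fun ξ : Em => h (x, ξ)) ξ) := by
    have hc : ContDiff ℝ ((n : ℕ∞) : WithTop ℕ∞) (fun ξ : Em => h (x, ξ)) :=
      (h.smooth n).comp (contDiff_const.prodMk contDiff_id)
    exact hc.continuous_iteratedFDeriv le_rfl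
  have hint : Integrable (fun ξ : Em => ‖iteratedFDeriv ℝ n (fun ξ : Em => h (x, ξ)) ξ‖) := by
    refine Integrable.mono' (s8_majorant_int.const_mul S) hcont.norm.aestronglyMeasurable ?_
    filter_upwards with ξ using by simpa using hb ξ
  refine ⟨hint, ?_⟩
  rw [← integral_const_mul]
  exact integral_mono hint (s8_majorant_int.const_mul S) hb
end key

lemma s8_aux_pow (n : ℕ) {t : ℝ} (ht : 0 ≤ t) : (1 + t) ^ n ≤ 2 ^ n * (1 + t ^ n) := by
  have h1 : (1 + t) ≤ 2 * max 1 t := by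
    rcases le_total t 1 with h | h
    · rw [max_eq_left h]; linarith
    · rw [max_eq_right h]; linarith
  calc (1 + t) ^ n ≤ (2 * max 1 t) ^ n := pow_le_pow_left₀ (by positivity) h1 n
    _ = 2 ^ n * (max 1 t) ^ n := mul_pow _ _ _
    _ ≤ 2 ^ n * (1 + t ^ n) := by
        have : (max 1 t) ^ n ≤ 1 + t ^ n := by
          rcases le_total t 1 with h | h
          · rw [max_eq_left h]; have := pow_nonneg ht n; simp; positivity
          · rw [max_eq_right h]; have := pow_nonneg ht n; linarith
        nlinarith [pow_nonneg (le_of_lt (two_pos (α := ℝ))) n]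

section key2
variable {m : ℕ}
local notation "Em" => EuclideanSpace ℝ (Fin m)
local notation "Pm" => EuclideanSpace ℝ (Fin m) × EuclideanSpace ℝ (Fin m)

lemma s8_fhat_eq (h : SchwartzMap (EuclideanSpace ℝ (Fin m) × EuclideanSpace ℝ (Fin m)) ℂ)
    (x y : Em) : fhat ⇑h x y = 𝓕 (fun ξ : Em => h (x, ξ)) ((2 * π)⁻¹ • y) := by
  rw [Real.fourier_eq']
  unfold fhat
  refine integral_congr_ae (Filter.Eventually.of_forall fun ξ => ?_)
  dsimp only
  have h1 : (inner ℝ ξ ((2 * π)⁻¹ • y) : ℝ) = (2 * π)⁻¹ * (inner ℝ ξ y : ℝ) :=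
    real_inner_smul_right _ _ _
  rw [h1, real_inner_comm ξ y, smul_eq_mul, mul_comm]
  congr 1
  have h2 : (-2 * π * ((2 * π)⁻¹ * (inner ℝ ξ y : ℝ))) = -(inner ℝ ξ y : ℝ) := by
    field_simp
  rw [h2]
  push_cast
  ring

lemma s8_key (h : SchwartzMap (EuclideanSpace ℝ (Fin m) × EuclideanSpace ℝ (Fin m)) ℂ) :
    ∃ B : ℝ, 0 ≤ B ∧ ∀ (x y : Em), ‖fhat ⇑h x y‖ ≤ B * ((1 + ‖y‖) ^ (m + 1))⁻¹ := by
  obtain ⟨S, hS0, hS⟩ := s8_decay h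
  set I₀ : ℝ := ∫ ξ : Em, ((1 + ‖ξ‖) ^ (m + 1))⁻¹ with hI₀
  have hI₀0 : 0 ≤ I₀ := integral_nonneg (fun ξ => by positivity)
  set B₁ : ℝ := S * I₀ with hB₁
  have hB₁0 : 0 ≤ B₁ := mul_nonneg hS0 hI₀0
  set C₂ : ℝ := 2 ^ (m + 1) * ((m + 2) * B₁) with hC₂
  have hC₂0 : 0 ≤ C₂ := by positivity
  have step2 : ∀ (x : Em) (w : Em) (n : ℕ), n ≤ m + 1 →
      ‖w‖ ^ n * ‖𝓕 (fun ξ : Em => h (x, ξ)) w‖ ≤ C₂ := by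
    intro x w n hn
    set f : Em → ℂ := fun ξ => h (x, ξ) with hf
    have hfc : ContDiff ℝ ((m + 1 : ℕ) : ℕ∞) f :=
      (h.smooth _).comp (contDiff_const.prodMk contDiff_id)
    have h'f : ∀ (k n : ℕ), (k : ℕ∞) ≤ (0 : ℕ∞) → (n : ℕ∞) ≤ ((m + 1 : ℕ) : ℕ∞) →
        Integrable (fun v => ‖v‖ ^ k * ‖iteratedFDeriv ℝ n f v‖) := by
      intro k n hk hn'
      have hk0 : k = 0 := by
        have : k ≤ 0 := by exact_mod_cast hk
        omega
      subst hk0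
      have hn'' : n ≤ m + 1 := by exact_mod_cast hn'
      simpa using (s8_slice_int h hS x hn'').1
    have key := Real.pow_mul_norm_iteratedFDeriv_fourier_le
      (K := (0 : ℕ∞)) (N := ((m + 1 : ℕ) : ℕ∞)) hfc h'f
      (k := 0) (n := n) le_rfl (by exact_mod_cast hn) w
    simp only [pow_zero, one_mul, norm_iteratedFDeriv_zero, Nat.cast_zero, mul_zero,
      zero_add] at key
    have hsum : ∑ p ∈ Finset.range (0 + 1) ×ˢ Finset.range (n + 1),
        (∫ v, ‖v‖ ^ p.1 * ‖iteratedFDeriv ℝ p.2 f v‖) ≤ (n + 1 : ℕ) * B₁ := by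
      have hcard : (Finset.range (0 + 1) ×ˢ Finset.range (n + 1)).card = n + 1 := by
        simp [Finset.card_product]
      calc ∑ p ∈ Finset.range (0 + 1) ×ˢ Finset.range (n + 1),
            (∫ v, ‖v‖ ^ p.1 * ‖iteratedFDeriv ℝ p.2 f v‖)
          ≤ (Finset.range (0 + 1) ×ˢ Finset.range (n + 1)).card • B₁ := by
            refine Finset.sum_le_card_nsmul _ _ _ (fun p hp => ?_)
            obtain ⟨hp1, hp2⟩ := Finset.mem_product.mp hp
            have hp1' : p.1 = 0 := by simpa using hp1
            have hp2' : p.2 ≤ m + 1 := by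
              have := Finset.mem_range.mp hp2; omega
            rw [hp1']
            simpa using (s8_slice_int h hS x hp2').2
        _ = (n + 1 : ℕ) * B₁ := by rw [hcard, nsmul_eq_mul]
    refine key.trans ?_
    have h2n : (2 : ℝ) ^ n ≤ 2 ^ (m + 1) := pow_le_pow_right₀ one_le_two hn
    have hnn : ((n + 1 : ℕ) : ℝ) ≤ (m + 2 : ℝ) := by
      have : (n : ℝ) ≤ (m : ℝ) + 1 := by exact_mod_cast hn
      push_cast
      linarith
    calc (2 : ℝ) ^ n *
          ∑ p ∈ Finset.range (0 + 1) ×ˢ Finset.range (n + 1),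
            (∫ v, ‖v‖ ^ p.1 * ‖iteratedFDeriv ℝ p.2 f v‖)
        ≤ 2 ^ n * ((n + 1 : ℕ) * B₁) := by
          have hnonneg : (0:ℝ) ≤ 2 ^ n := by positivity
          exact mul_le_mul_of_nonneg_left hsum hnonneg
      _ ≤ 2 ^ (m + 1) * ((m + 2 : ℝ) * B₁) := by
          refine mul_le_mul h2n (mul_le_mul_of_nonneg_right hnn hB₁0) (by positivity) (by positivity)
      _ = C₂ := rfl
  -- step3
  have h2π : (1 : ℝ) ≤ 2 * π := by nlinarith [Real.pi_gt_three]
  have step3 : ∀ (x y : Em) (n : ℕ), n ≤ m + 1 →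
      ‖y‖ ^ n * ‖fhat ⇑h x y‖ ≤ (2 * π) ^ (m + 1) * C₂ := by
    intro x y n hn
    rw [s8_fhat_eq h x y]
    have hw : ‖(2 * π)⁻¹ • y‖ = (2 * π)⁻¹ * ‖y‖ := by
      rw [norm_smul, Real.norm_eq_abs, abs_of_pos (by positivity)]
    have hy : ‖y‖ ^ n = (2 * π) ^ n * ‖(2 * π)⁻¹ • y‖ ^ n := by
      rw [hw, ← mul_pow]
      congr 1
      field_simp
    rw [hy, mul_assoc]
    have h2 := step2 x ((2 * π)⁻¹ • y) n hn
    have h3 : (2 * π) ^ n * (‖(2 * π)⁻¹ • y‖ ^ n * ‖𝓕 (fun ξ : Em => h (x, ξ)) ((2 * π)⁻¹ • y)‖)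
        ≤ (2 * π) ^ n * C₂ := mul_le_mul_of_nonneg_left h2 (by positivity)
    exact h3.trans (mul_le_mul_of_nonneg_right (pow_le_pow_right₀ h2π hn) hC₂0)
  refine ⟨2 ^ (m + 1) * (2 * ((2 * π) ^ (m + 1) * C₂)), by positivity, fun x y => ?_⟩
  set B₃ : ℝ := (2 * π) ^ (m + 1) * C₂ with hB₃
  have hfb : ‖fhat ⇑h x y‖ ≤ B₃ := by
    have := step3 x y 0 (by omega)
    simpa using this
  have hfb2 : ‖y‖ ^ (m + 1) * ‖fhat ⇑h x y‖ ≤ B₃ := step3 x y (m + 1) le_rfl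
  rw [← div_eq_mul_inv, le_div_iff₀ (by positivity)]
  calc ‖fhat ⇑h x y‖ * (1 + ‖y‖) ^ (m + 1)
      ≤ ‖fhat ⇑h x y‖ * (2 ^ (m + 1) * (1 + ‖y‖ ^ (m + 1))) := by
        gcongr
        exact s8_aux_pow (m + 1) (norm_nonneg y)
    _ = 2 ^ (m + 1) * (‖fhat ⇑h x y‖ + ‖y‖ ^ (m + 1) * ‖fhat ⇑h x y‖) := by ring
    _ ≤ 2 ^ (m + 1) * (B₃ + B₃) := by gcongr
    _ = 2 ^ (m + 1) * (2 * B₃) := by ring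
end key2

section cont
variable {m : ℕ}
local notation "Em" => EuclideanSpace ℝ (Fin m)
local notation "Pm" => EuclideanSpace ℝ (Fin m) × EuclideanSpace ℝ (Fin m)

lemma s8_norm_exp_inner (y ξ : Em) :
    ‖Complex.exp (-(Complex.I * ((inner ℝ y ξ : ℝ) : ℂ)))‖ = 1 := by
  have : -(Complex.I * ((inner ℝ y ξ : ℝ) : ℂ)) = ((-(inner ℝ y ξ : ℝ) : ℝ) : ℂ) * Complex.I := by
    push_cast; ring
  rw [this]
  exact Complex.norm_exp_ofReal_mul_I _

lemma s8_h_bound (h : SchwartzMap (EuclideanSpace ℝ (Fin m) × EuclideanSpace ℝ (Fin m)) ℂ)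
    {S : ℝ} (hS : ∀ n : ℕ, n ≤ m + 1 → ∀ p : Pm,
      (1 + ‖p.2‖) ^ (m + 1) * ‖iteratedFDeriv ℝ n ⇑h p‖ ≤ S)
    (x ξ : Em) : ‖h (x, ξ)‖ ≤ S * ((1 + ‖ξ‖) ^ (m + 1))⁻¹ := by
  have h2 := hS 0 (by omega) (x, ξ)
  rw [norm_iteratedFDeriv_zero] at h2
  rw [← div_eq_mul_inv, le_div_iff₀ (by positivity)]
  simpa [mul_comm] using h2

lemma s8_fhat_cont (h : SchwartzMap (EuclideanSpace ℝ (Fin m) × EuclideanSpace ℝ (Fin m)) ℂ) :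
    Continuous (fun p : Pm => fhat ⇑h p.1 p.2) := by
  obtain ⟨S, hS0, hS⟩ := s8_decay h
  have : (fun p : Pm => fhat ⇑h p.1 p.2) = fun p : Pm => ∫ ξ : Em,
      h (p.1, ξ) * Complex.exp (-(Complex.I * ((inner ℝ p.2 ξ : ℝ) : ℂ))) := rfl
  rw [this]
  refine continuous_of_dominated (bound := fun ξ : Em => S * ((1 + ‖ξ‖) ^ (m + 1))⁻¹)
    ?_ ?_ ?_ ?_
  · intro p
    refine Continuous.aestronglyMeasurable ?_
    refine ((h.continuous.comp (continuous_const.prodMk continuous_id)).mul ?_)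
    refine Complex.continuous_exp.comp ?_
    refine Continuous.neg ?_
    refine continuous_const.mul ?_
    exact Complex.continuous_ofReal.comp ((continuous_const (y := p.2)).inner continuous_id)
  · intro p
    filter_upwards with ξ
    rw [norm_mul, s8_norm_exp_inner, mul_one]
    exact s8_h_bound h hS p.1 ξ
  · exact s8_majorant_int.const_mul S
  · filter_upwards with ξ
    refine ((h.continuous.comp (continuous_fst.prodMk continuous_const)).mul ?_)
    refine Complex.continuous_exp.comp (Continuous.neg (continuous_const.mul ?_))
    exact Complex.continuous_ofReal.comp ((continuous_snd).inner continuous_const)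
end cont


set_option maxHeartbeats 2000000 in
/-- Let `m ≥ 1`, `h ∈ 𝒮(ℝᵐ×ℝᵐ; ℂ)`, and let `g` be a linear
transformation of `ℝᵐ` such that `g − 1` is invertible.  Then
`lim_{ℏ → 0⁺} ℏ^{−m} ∫ ĥ(v, ((g−1)v)/ℏ) dv = (2π)ᵐ · h(0,0) / |det(g − 1)|`. -/
theorem statement8 (m : ℕ) (hm : 1 ≤ m)
    (h : SchwartzMap (EuclideanSpace ℝ (Fin m) × EuclideanSpace ℝ (Fin m)) ℂ)
    (g : EuclideanSpace ℝ (Fin m) →ₗ[ℝ] EuclideanSpace ℝ (Fin m))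
    (hg : IsUnit (g - LinearMap.id)) :
    Tendsto
      (fun ℏ : ℝ => ((ℏ ^ m : ℝ) : ℂ)⁻¹ *
        ∫ v : EuclideanSpace ℝ (Fin m), fhat ⇑h v (ℏ⁻¹ • (g v - v)))
      (nhdsWithin 0 (Set.Ioi 0))
      (nhds ((((2 * Real.pi) ^ m / |LinearMap.det (g - LinearMap.id)| : ℝ) : ℂ) *
        h (0, 0))) := by
  classical
  set T : EuclideanSpace ℝ (Fin m) →ₗ[ℝ] EuclideanSpace ℝ (Fin m) := g - LinearMap.id with hTdef
  obtain ⟨B, hB0, hB⟩ := s8_key h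
  obtain ⟨S, hS0, hS⟩ := s8_decay h
  have hTcont : Continuous T := T.continuous_of_finiteDimensional
  -- inverse control
  set Tinv : EuclideanSpace ℝ (Fin m) →ₗ[ℝ] EuclideanSpace ℝ (Fin m) := ↑(hg.unit⁻¹) with hTinvdef
  have hunit : (hg.unit : EuclideanSpace ℝ (Fin m) →ₗ[ℝ] EuclideanSpace ℝ (Fin m)) = T :=
    hg.unit_spec
  have hTT : ∀ w, Tinv (T w) = w := by
    intro w
    have h1 := congrArg (fun L : Module.End ℝ (EuclideanSpace ℝ (Fin m)) => L w)
      hg.unit.inv_mul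
    simp only [Module.End.mul_apply] at h1
    rw [hunit] at h1
    simpa using h1
  have hTT' : ∀ w, T (Tinv w) = w := by
    intro w
    have h1 := congrArg (fun L : Module.End ℝ (EuclideanSpace ℝ (Fin m)) => L w)
      hg.unit.mul_inv
    simp only [Module.End.mul_apply] at h1
    rw [hunit] at h1
    simpa using h1
  set c : ℝ := ‖LinearMap.toContinuousLinearMap Tinv‖ + 1 with hc
  have hc0 : 0 < c := by positivity
  have hlow : ∀ w, ‖w‖ ≤ c * ‖T w‖ := by
    intro w
    conv_lhs => rw [← hTT w]
    calc ‖Tinv (T w)‖ = ‖(LinearMap.toContinuousLinearMap Tinv) (T w)‖ := rfl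
      _ ≤ ‖LinearMap.toContinuousLinearMap Tinv‖ * ‖T w‖ :=
          (LinearMap.toContinuousLinearMap Tinv).le_opNorm _
      _ ≤ c * ‖T w‖ := by
          have := norm_nonneg (T w)
          nlinarith
  have hcont := s8_fhat_cont h
  -- dominating function
  have hmaj : Integrable (fun w : EuclideanSpace ℝ (Fin m) =>
      B * ((1 + ‖c⁻¹ • w‖) ^ (m + 1))⁻¹) := by
    have h1 : Integrable (fun w : EuclideanSpace ℝ (Fin m) =>
        ((1 + ‖c⁻¹ • w‖) ^ (m + 1))⁻¹) :=
      (s8_majorant_int (m := m)).comp_smul (inv_ne_zero hc0.ne')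
    exact h1.const_mul B
  have hdom : ∀ (ℏ : ℝ) (w : EuclideanSpace ℝ (Fin m)),
      ‖fhat ⇑h (ℏ • w) (T w)‖ ≤ B * ((1 + ‖c⁻¹ • w‖) ^ (m + 1))⁻¹ := by
    intro ℏ w
    refine (hB (ℏ • w) (T w)).trans ?_
    have h1 : ‖c⁻¹ • w‖ ≤ ‖T w‖ := by
      rw [norm_smul, Real.norm_eq_abs, abs_of_pos (inv_pos.mpr hc0)]
      rw [inv_mul_le_iff₀ hc0]
      exact hlow w
    have h2 : ((1 + ‖T w‖) ^ (m + 1))⁻¹ ≤ ((1 + ‖c⁻¹ • w‖) ^ (m + 1))⁻¹ := by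
      apply inv_anti₀ (by positivity)
      exact pow_le_pow_left₀ (by positivity) (by linarith) _
    exact mul_le_mul_of_nonneg_left h2 hB0
  -- the rescaled family tends to the limit integral
  have hlim : Tendsto (fun ℏ : ℝ => ∫ w, fhat ⇑h (ℏ • w) (T w))
      (nhdsWithin 0 (Set.Ioi 0)) (nhds (∫ w, fhat ⇑h 0 (T w))) := by
    refine tendsto_integral_filter_of_dominated_convergence
      (fun w : EuclideanSpace ℝ (Fin m) => B * ((1 + ‖c⁻¹ • w‖) ^ (m + 1))⁻¹) ?_ ?_ hmaj ?_
    · filter_upwards with ℏ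
      refine Continuous.aestronglyMeasurable ?_
      exact hcont.comp ((continuous_const_smul ℏ).prodMk hTcont)
    · filter_upwards with ℏ
      filter_upwards with w
      exact hdom ℏ w
    · filter_upwards with w
      have h1 : Tendsto (fun ℏ : ℝ => ((ℏ • w, T w) :
          EuclideanSpace ℝ (Fin m) × EuclideanSpace ℝ (Fin m)))
          (nhdsWithin 0 (Set.Ioi 0)) (nhds (0, T w)) := by
        have h2 : Tendsto (fun ℏ : ℝ => ℏ • w) (nhds 0) (nhds ((0:ℝ) • w)) :=
          (continuous_id.smul continuous_const).tendsto 0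
        rw [zero_smul] at h2
        exact ((h2.prodMk_nhds tendsto_const_nhds)).mono_left nhdsWithin_le_nhds
      exact (hcont.continuousAt.tendsto.comp h1)
  -- change of variables for each ℏ > 0
  have heq : ∀ᶠ ℏ in nhdsWithin (0:ℝ) (Set.Ioi 0),
      ((ℏ ^ m : ℝ) : ℂ)⁻¹ * (∫ v, fhat ⇑h v (ℏ⁻¹ • (g v - v))) =
        ∫ w, fhat ⇑h (ℏ • w) (T w) := by
    filter_upwards [self_mem_nhdsWithin] with ℏ hℏ
    have hℏ0 : (0:ℝ) < ℏ := hℏ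
    have hne : ℏ ≠ 0 := ne_of_gt hℏ0
    have hco : ∀ v : EuclideanSpace ℝ (Fin m),
        fhat ⇑h v (ℏ⁻¹ • (g v - v)) = (fun w => fhat ⇑h (ℏ • w) (T w)) (ℏ⁻¹ • v) := by
      intro v
      have hTv : T (ℏ⁻¹ • v) = ℏ⁻¹ • (g v - v) := by
        rw [LinearMap.map_smul]
        congr 1
      simp only
      rw [smul_smul, mul_inv_cancel₀ hne, one_smul, hTv]
    rw [integral_congr_ae (Filter.Eventually.of_forall hco),
      MeasureTheory.Measure.integral_comp_inv_smul volume (fun w => fhat ⇑h (ℏ • w) (T w)) ℏ,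
      finrank_euclideanSpace_fin, abs_of_pos (pow_pos hℏ0 m), Complex.real_smul,
      ← mul_assoc, inv_mul_cancel₀ (Complex.ofReal_ne_zero.mpr (pow_ne_zero m hne)), one_mul]
  -- value of the limit integral
  have hdet : LinearMap.det T ≠ 0 := (hg.map LinearMap.det).ne_zero
  have hvalE : ∫ w, fhat ⇑h 0 (T w) = |(LinearMap.det T)⁻¹| • ∫ u, fhat ⇑h 0 u := by
    set Teq : EuclideanSpace ℝ (Fin m) ≃ₗ[ℝ] EuclideanSpace ℝ (Fin m) :=
      LinearEquiv.ofLinear T Tinv (LinearMap.ext hTT') (LinearMap.ext hTT) with hTeq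
    set e := Teq.toContinuousLinearEquiv.toHomeomorph.toMeasurableEquiv with he
    have hce : ∀ w, e w = T w := fun w => rfl
    have hfun : ⇑e = ⇑T := funext hce
    have h1 := MeasureTheory.integral_map_equiv (μ := volume) e (fun u => fhat ⇑h 0 u)
    have h2 : (volume : Measure (EuclideanSpace ℝ (Fin m))).map ⇑e =
        (ENNReal.ofReal |(LinearMap.det T)⁻¹|) • volume := by
      rw [hfun]
      exact MeasureTheory.Measure.map_linearMap_addHaar_eq_smul_addHaar volume hdet
    have h1' : ∫ w, fhat ⇑h 0 (e w) = ∫ w, fhat ⇑h 0 (T w) := by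
      exact integral_congr_ae (Filter.Eventually.of_forall fun w =>
        congrArg (fhat (⇑h) 0) (hce w))
    rw [← h1', ← h1, h2, integral_smul_measure, ENNReal.toReal_ofReal (abs_nonneg _)]
  have h2π : (1:ℝ) ≤ 2 * π := by nlinarith [Real.pi_gt_three]
  set h0 : EuclideanSpace ℝ (Fin m) → ℂ := fun ξ => h (0, ξ) with hh0
  have hh0cont : Continuous h0 :=
    h.continuous.comp (continuous_const.prodMk continuous_id)
  have hh0int : Integrable h0 := by
    refine Integrable.mono' ((s8_majorant_int (m := m)).const_mul S)
      hh0cont.aestronglyMeasurable ?_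
    filter_upwards with ξ
    exact s8_h_bound h hS 0 ξ
  have hFT : 𝓕 h0 = fun w => fhat ⇑h 0 ((2 * π) • w) := by
    funext w
    have h1 := s8_fhat_eq h 0 ((2 * π) • w)
    rw [smul_smul, inv_mul_cancel₀ (by positivity : (2 * π : ℝ) ≠ 0), one_smul] at h1
    exact h1.symm
  have hFTint : Integrable (𝓕 h0) := by
    rw [hFT]
    refine Integrable.mono' ((s8_majorant_int (m := m)).const_mul B)
      (Continuous.aestronglyMeasurable ?_) ?_
    · exact hcont.comp (continuous_const.prodMk (continuous_const_smul (2 * π)))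
    · filter_upwards with w
      refine (hB 0 ((2 * π) • w)).trans ?_
      have hwle : ‖w‖ ≤ ‖(2 * π) • w‖ := by
        rw [norm_smul, Real.norm_eq_abs, abs_of_pos (by positivity)]
        nlinarith [norm_nonneg w]
      have h2 : ((1 + ‖(2 * π) • w‖) ^ (m + 1))⁻¹ ≤ ((1 + ‖w‖) ^ (m + 1))⁻¹ := by
        apply inv_anti₀ (by positivity)
        exact pow_le_pow_left₀ (by positivity) (by linarith) _
      exact mul_le_mul_of_nonneg_left h2 hB0
  have hinv0 : ∫ u, 𝓕 h0 u = h (0, 0) := by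
    have hi := hh0int.fourierInv_fourier_eq hFTint (hh0cont.continuousAt (x := 0))
    rw [Real.fourierInv_eq] at hi
    simpa using hi
  have hvalF : ∫ u, fhat ⇑h 0 u = (((2 * π) ^ m : ℝ) : ℂ) * h (0, 0) := by
    calc ∫ u, fhat ⇑h 0 u = ∫ u, 𝓕 h0 ((2 * π)⁻¹ • u) :=
          integral_congr_ae (Filter.Eventually.of_forall fun u => s8_fhat_eq h 0 u)
      _ = |(2 * π) ^ (Module.finrank ℝ (EuclideanSpace ℝ (Fin m)))| • ∫ u, 𝓕 h0 u :=
          MeasureTheory.Measure.integral_comp_inv_smul volume (𝓕 h0) (2 * π)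
      _ = (((2 * π) ^ m : ℝ) : ℂ) * h (0, 0) := by
          rw [finrank_euclideanSpace_fin, hinv0, abs_of_pos (by positivity),
            Complex.real_smul]
  have hval : ∫ w, fhat ⇑h 0 (T w) =
      (((2 * π) ^ m / |LinearMap.det T| : ℝ) : ℂ) * h (0, 0) := by
    rw [hvalE, hvalF, Complex.real_smul, abs_inv]
    push_cast
    ring
  rw [← hval]
  have heq' : (fun ℏ : ℝ => ∫ w, fhat ⇑h (ℏ • w) (T w)) =ᶠ[nhdsWithin (0:ℝ) (Set.Ioi 0)]
      (fun ℏ : ℝ => ((ℏ ^ m : ℝ) : ℂ)⁻¹ *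
        ∫ v, fhat ⇑h v (ℏ⁻¹ • (g v - v))) :=
    heq.mono fun ℏ hℏ => hℏ.symm
  exact hlim.congr' heq'

end s8aux
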